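/- arXiv:2305.15012 — 5 statements merged into one kernel-verified Lean document; each statement's English description precedes it below -/
import Mathlib

section
/- Let t = (t_0,...,t_{N'-1}) and x = (x_0,...,x_{κ'-1}) be probability vectors sorted in decreasing order with κ' ≤ N', and suppose x majorizes t. Let (m_j)_{j=0}^{κ'-1} and (n_j)_{j=0}^{N'-1} be increasing nonnegative sequences with m_0 = n_0 = 0. Then ∑_{j=1}^{κ'-1} m_j x_j − ∑_{j=1}^{N'-1} n_j t_j ≤ ∑_{i=1}^{κ'-2}(m_i − n_i) t_i + ∑_{i=κ'-1}^{N'-1}(m_{κ'-1} − n_i) t_i. -/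
open Finset

/-- Global separability bound (Theorem 1, condition 2b). -/
theorem stmt_2 (N κ : ℕ) (hκN : κ ≤ N) (hκ : 1 ≤ κ)
    (t x m n : ℕ → ℝ)
    (ht_nonneg : ∀ i, 0 ≤ t i) (hx_nonneg : ∀ i, 0 ≤ x i)
    (ht_dec : ∀ i j, i ≤ j → t j ≤ t i) (hx_dec : ∀ i j, i ≤ j → x j ≤ x i)
    (ht_sum : ∑ i ∈ Finset.range N, t i = 1)
    (hx_sum : ∑ i ∈ Finset.range κ, x i = 1)
    (hx_pad : ∀ i, κ ≤ i → x i = 0)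
    (hmaj : ∀ k, k < N →
      ∑ i ∈ Finset.range (k + 1), t i ≤ ∑ i ∈ Finset.range (k + 1), x i)
    (hm_mono : ∀ i j, i ≤ j → m i ≤ m j) (hn_mono : ∀ i j, i ≤ j → n i ≤ n j)
    (hm_nonneg : ∀ i, 0 ≤ m i) (hn_nonneg : ∀ i, 0 ≤ n i)
    (hm0 : m 0 = 0) (hn0 : n 0 = 0) :
    ∑ j ∈ Finset.Ico 1 κ, m j * x j - ∑ j ∈ Finset.Ico 1 N, n j * t j ≤
      ∑ i ∈ Finset.Ico 1 (κ - 1), (m i - n i) * t i +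
        ∑ i ∈ Finset.Ico (κ - 1) N, (m (κ - 1) - n i) * t i := by
  set D : ℕ → ℝ := fun i => if i < κ then m i - m (i - 1) else 0 with hD
  have hDnn : ∀ i, 0 ≤ D i := by
    intro i; simp only [hD]
    split
    · exact sub_nonneg.2 (hm_mono _ _ (Nat.sub_le i 1))
    · exact le_refl 0
  have htel : ∀ k, k < κ → m k = ∑ i ∈ Ico 1 (k + 1), D i := by
    intro k hk
    rw [Finset.sum_Ico_eq_sum_range]
    simp only [Nat.add_sub_cancel]
    have hc : ∀ i ∈ range k, D (1 + i) = m (i + 1) - m i := by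
      intro i hi
      have hi' : i < k := mem_range.1 hi
      have h1 : 1 + i < κ := by omega
      have h3 : i + 1 < κ := by omega
      simp only [Nat.add_comm 1 i, hD, if_pos h3, Nat.add_sub_cancel]
    rw [Finset.sum_congr rfl hc, Finset.sum_range_sub, hm0, sub_zero]
  have hM : ∀ j, 1 ≤ j → m (min j (κ - 1)) = ∑ i ∈ Ico 1 (j + 1), D i := by
    intro j hj
    rcases lt_or_ge j κ with h | h
    · have hmin : min j (κ - 1) = j := by omega
      rw [hmin]; exact htel j h
    · have hmin : min j (κ - 1) = κ - 1 := by omega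
      have hz : ∑ i ∈ Ico κ (j + 1), D i = 0 := by
        apply Finset.sum_eq_zero
        intro i hi
        have : ¬ i < κ := by have := (mem_Ico.1 hi).1; omega
        simp [hD, this]
      rw [hmin, htel (κ - 1) (by omega),
        ← Finset.sum_Ico_consecutive _ (by omega : 1 ≤ κ - 1 + 1) (by omega : κ - 1 + 1 ≤ j + 1)]
      have hk1 : κ - 1 + 1 = κ := by omega
      rw [hk1, hz, add_zero]
  have hswap : ∀ (K : ℕ) (f : ℕ → ℝ),
      ∑ j ∈ Ico 1 K, (∑ i ∈ Ico 1 (j + 1), D i) * f j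
        = ∑ i ∈ Ico 1 K, D i * ∑ j ∈ Ico i K, f j := by
    intro K f
    simp_rw [Finset.sum_mul]
    rw [← Finset.sum_Ico_Ico_comm]
    simp_rw [Finset.mul_sum]
  have hx_eq : ∑ j ∈ Ico 1 κ, m j * x j = ∑ i ∈ Ico 1 κ, D i * ∑ j ∈ Ico i κ, x j := by
    rw [← hswap]
    refine Finset.sum_congr rfl (fun j hj => ?_)
    rw [← htel j (mem_Ico.1 hj).2]
  have ht_eq : ∑ j ∈ Ico 1 N, m (min j (κ - 1)) * t j
      = ∑ i ∈ Ico 1 N, D i * ∑ j ∈ Ico i N, t j := by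
    rw [← hswap]
    refine Finset.sum_congr rfl (fun j hj => ?_)
    rw [← hM j (mem_Ico.1 hj).1]
  have hext : ∑ i ∈ Ico 1 κ, D i * ∑ j ∈ Ico i κ, x j
      = ∑ i ∈ Ico 1 N, D i * ∑ j ∈ Ico i κ, x j := by
    apply Finset.sum_subset (Finset.Ico_subset_Ico le_rfl hκN)
    intro i hi hi2
    simp only [mem_Ico] at hi hi2
    have h1 : ¬ i < κ := by omega
    simp [hD, h1]
  have hterm : ∀ i ∈ Ico 1 N, D i * ∑ j ∈ Ico i κ, x j ≤ D i * ∑ j ∈ Ico i N, t j := by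
    intro i hi
    simp only [mem_Ico] at hi
    rcases lt_or_ge i κ with h | h
    · apply mul_le_mul_of_nonneg_left _ (hDnn i)
      rw [Finset.sum_Ico_eq_sub _ (le_of_lt h), Finset.sum_Ico_eq_sub _ (le_of_lt hi.2),
        ht_sum, hx_sum]
      have hmj := hmaj (i - 1) (by omega)
      have he : i - 1 + 1 = i := by omega
      rw [he] at hmj
      linarith
    · have h1 : ¬ i < κ := not_lt.2 h
      simp [hD, h1]
  have key : ∑ j ∈ Ico 1 κ, m j * x j ≤ ∑ j ∈ Ico 1 N, m (min j (κ - 1)) * t j := by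
    rw [hx_eq, hext, ht_eq]
    exact Finset.sum_le_sum hterm
  have hfinal : ∑ j ∈ Ico 1 N, (m (min j (κ - 1)) - n j) * t j
      = ∑ i ∈ Ico 1 (κ - 1), (m i - n i) * t i
        + ∑ i ∈ Ico (κ - 1) N, (m (κ - 1) - n i) * t i := by
    rcases eq_or_lt_of_le hκ with h1 | h2
    · -- κ = 1
      have hk : κ - 1 = 0 := by omega
      have hN : 0 < N := by omega
      rw [hk]
      simp only [Nat.min_zero, hm0]
      rw [Finset.sum_eq_sum_Ico_succ_bot hN, hn0]
      simp
    · -- κ ≥ 2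
      rw [← Finset.sum_Ico_consecutive _ (by omega : 1 ≤ κ - 1) (by omega : κ - 1 ≤ N)]
      congr 1
      · refine Finset.sum_congr rfl (fun j hj => ?_)
        simp only [mem_Ico] at hj
        have : min j (κ - 1) = j := by omega
        rw [this]
      · refine Finset.sum_congr rfl (fun j hj => ?_)
        simp only [mem_Ico] at hj
        have : min j (κ - 1) = κ - 1 := by omega
        rw [this]
  have hsub : ∑ j ∈ Ico 1 N, m (min j (κ - 1)) * t j - ∑ j ∈ Ico 1 N, n j * t j
      = ∑ j ∈ Ico 1 N, (m (min j (κ - 1)) - n j) * t j := by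
    rw [← Finset.sum_sub_distrib]
    exact Finset.sum_congr rfl (fun j _ => by ring)
  calc ∑ j ∈ Ico 1 κ, m j * x j - ∑ j ∈ Ico 1 N, n j * t j
      ≤ ∑ j ∈ Ico 1 N, m (min j (κ - 1)) * t j - ∑ j ∈ Ico 1 N, n j * t j := by linarith
    _ = ∑ j ∈ Ico 1 N, (m (min j (κ - 1)) - n j) * t j := hsub
    _ = _ := hfinal
end

section
/- Any two-qubit state separable across the 1|2 cut, on a system with local Hamiltonians having energy gaps α_1 and α_2, satisfies Δ_{1|2} ≤ max{(α_1 − α_2)/2, 0}, where Δ_{1|2} = m_1 x_1 − ∑_{i=1}^{3} n_i t_i, with x the decreasing spectrum of the first marginal, t the decreasing spectrum of the global state, m_1 = α_1, and (n_1,n_2,n_3) the increasing ordering of (min(α_1,α_2), max(α_1,α_2), α_1+α_2). -/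
/-- Proposition 1: any two-qubit state separable across the 1|2 cut (so that its
marginal spectrum x majorizes its global spectrum t, by Nielsen–Kempe) satisfies
Δ_{1|2} = m₁ x₁ − (n₁ t₁ + n₂ t₂ + n₃ t₃) ≤ max{(α₁ − α₂)/2, 0}, where m₁ = α₁ and
(n₁, n₂, n₃) = (min α₁ α₂, max α₁ α₂, α₁ + α₂). -/
theorem stmt_7 (α₁ α₂ : ℝ) (hα₁ : 0 < α₁) (hα₂ : 0 < α₂)
    (x₀ x₁ t₀ t₁ t₂ t₃ : ℝ)
    (hx1 : 0 ≤ x₁) (hx10 : x₁ ≤ x₀) (hx_sum : x₀ + x₁ = 1)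
    (ht3 : 0 ≤ t₃) (ht32 : t₃ ≤ t₂) (ht21 : t₂ ≤ t₁) (ht10 : t₁ ≤ t₀)
    (ht_sum : t₀ + t₁ + t₂ + t₃ = 1)
    (hmaj0 : t₀ ≤ x₀) (hmaj1 : t₀ + t₁ ≤ x₀ + x₁) (hmaj2 : t₀ + t₁ + t₂ ≤ x₀ + x₁) :
    α₁ * x₁ - (min α₁ α₂ * t₁ + max α₁ α₂ * t₂ + (α₁ + α₂) * t₃) ≤
      max ((α₁ - α₂) / 2) 0 := by
  have hxt : x₁ ≤ t₁ + t₂ + t₃ := by linarith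
  have ht1half : t₁ ≤ 1 / 2 := by linarith
  have ht2 : 0 ≤ t₂ := le_trans ht3 ht32
  have ht1 : 0 ≤ t₁ := le_trans ht2 ht21
  rcases le_total α₁ α₂ with h | h
  · rw [min_eq_left h, max_eq_right h]
    refine le_trans ?_ (le_max_right _ _)
    nlinarith [mul_nonneg hα₁.le (sub_nonneg.2 hxt), mul_nonneg (sub_nonneg.2 h) ht2]
  · rw [min_eq_right h, max_eq_left h]
    refine le_trans ?_ (le_max_left _ _)
    nlinarith [mul_nonneg hα₁.le (sub_nonneg.2 hxt),
      mul_nonneg (sub_nonneg.2 h) (sub_nonneg.2 ht1half)]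
end

section
/- Let t = (t_0,...,t_7) be a probability vector with decreasing entries and 0 < α_3 < α. Then (α − α_3) t_1 − α_3(t_4 + t_5) − α t_6 − (α + α_3) t_7 ≤ (α − α_3)/2, with equality at t = (1/2, 1/2, 0, 0, 0, 0, 0, 0). -/
/-- Three-qubit state-independent bound across the 1|23 cut, case α₁ = α₂ = α > α₃:
(α − α₃) t₁ − α₃ (t₄ + t₅) − α t₆ − (α + α₃) t₇ ≤ (α − α₃)/2, with the maximum
attained at t = (1/2, 1/2, 0, 0, 0, 0, 0, 0). -/
theorem stmt_9 (α α₃ : ℝ) (hα₃ : 0 < α₃) (h : α₃ < α) :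
    IsGreatest {v : ℝ | ∃ t : ℕ → ℝ, (∀ i, 0 ≤ t i) ∧ (∀ i j, i ≤ j → t j ≤ t i) ∧
        (∑ i ∈ Finset.range 8, t i = 1) ∧
        v = (α - α₃) * t 1 - α₃ * (t 4 + t 5) - α * t 6 - (α + α₃) * t 7}
      ((α - α₃) / 2) := by
  constructor
  · refine ⟨fun i => if i ≤ 1 then 1/2 else 0, ?_, ?_, ?_, ?_⟩
    · intro i; dsimp only; split <;> norm_num
    · intro i j hij
      by_cases hj : j ≤ 1
      · simp [hj, le_trans hij hj]
      · simp only [hj, if_false]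
        split <;> norm_num
    · simp [Finset.sum_range_succ]; norm_num
    · norm_num; ring
  · rintro v ⟨t, hpos, hmono, hsum, rfl⟩
    simp only [Finset.sum_range_succ, Finset.sum_range_zero] at hsum
    have h01 : t 1 ≤ t 0 := hmono 0 1 (by norm_num)
    have h1 : t 1 ≤ 1/2 := by
      nlinarith [hpos 2, hpos 3, hpos 4, hpos 5, hpos 6, hpos 7]
    nlinarith [hpos 4, hpos 5, hpos 6, hpos 7, hα₃.le, h.le]
end

section
/- Let t = (t_0,...,t_7) be a probability vector with decreasing entries and 0 < α_3 < α with α_3 ≥ 2α/3. Then (α − α_3)(t_1 + t_4 + t_5) + α t_3 ≤ (α − α_3)/4 + α/4, with equality at t = (1/4,1/4,1/4,1/4,0,0,0,0). -/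
/-- Three-qubit state-independent bound across the 12|3 cut, case
α₁ = α₂ = α > α₃ with α₃ ≥ 2α/3: (α − α₃)(t₁ + t₄ + t₅) + α t₃ ≤ (α − α₃)/4 + α/4,
with the maximum attained at t = (1/4,1/4,1/4,1/4,0,0,0,0). -/
theorem stmt_11 (α α₃ : ℝ) (hα₃ : 0 < α₃) (h : α₃ < α) (h23 : 2 * α / 3 ≤ α₃) :
    IsGreatest {v : ℝ | ∃ t : ℕ → ℝ, (∀ i, 0 ≤ t i) ∧ (∀ i j, i ≤ j → t j ≤ t i) ∧
        (∑ i ∈ Finset.range 8, t i = 1) ∧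
        v = (α - α₃) * (t 1 + t 4 + t 5) + α * t 3}
      ((α - α₃) / 4 + α / 4) := by
  constructor
  · refine ⟨fun i => if i < 4 then (1/4 : ℝ) else 0, ?_, ?_, ?_, ?_⟩
    · intro i; dsimp only; split <;> norm_num
    · intro i j hij; dsimp only
      by_cases hi : i < 4 <;> by_cases hj : j < 4 <;>
        simp [hi, hj] <;> omega
    · simp [Finset.sum_range_succ]; norm_num
    · norm_num; ring
  · rintro v ⟨t, ht0, hmono, hsum, rfl⟩
    simp only [Finset.sum_range_succ, Finset.sum_range_zero, zero_add] at hsum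
    have g0 := hmono 0 1 (by norm_num)
    have g1 := hmono 1 2 (by norm_num)
    have g2 := hmono 2 3 (by norm_num)
    have g3 := hmono 3 4 (by norm_num)
    have g4 := hmono 4 5 (by norm_num)
    have g5 := hmono 5 6 (by norm_num)
    have g6 := hmono 6 7 (by norm_num)
    have h7 := ht0 7
    have hα : 0 < α := lt_trans hα₃ h
    have l0 : (0:ℝ) ≤ ((α - α₃) + α) / 4 := by linarith
    have l1 : (0:ℝ) ≤ α₃ / 2 := by linarith
    have l2 : (0:ℝ) ≤ (3 * α - (α - α₃)) / 4 := by linarith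
    have l4 : (0:ℝ) ≤ (α - 3 * (α - α₃)) / 4 := by linarith
    have l5 : (0:ℝ) ≤ (α - 3 * (α - α₃)) / 2 := by linarith
    have l6 : (0:ℝ) ≤ (3 * α - 5 * (α - α₃)) / 4 := by linarith
    have l7 : (0:ℝ) ≤ α₃ := by linarith
    nlinarith [mul_nonneg l0 (sub_nonneg.mpr g0), mul_nonneg l1 (sub_nonneg.mpr g1),
      mul_nonneg l2 (sub_nonneg.mpr g2), mul_nonneg l4 (sub_nonneg.mpr g4),
      mul_nonneg l5 (sub_nonneg.mpr g5), mul_nonneg l6 (sub_nonneg.mpr g6),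
      mul_nonneg l7 h7]
end

section
/- Let t = (t_0,...,t_7) be a probability vector with decreasing entries and 0 < α_3 ≤ 2α/3 with α_3 < α. Then (α − α_3)(t_1 + t_4 + t_5) + α t_3 ≤ (α − α_3)/2 + α/6, with equality at t = (1/6,1/6,1/6,1/6,1/6,1/6,0,0). -/
/-- Three-qubit state-independent bound across the 12|3 cut, case
α₁ = α₂ = α > α₃ with α₃ ≤ 2α/3: (α − α₃)(t₁ + t₄ + t₅) + α t₃ ≤ (α − α₃)/2 + α/6,
with the maximum attained at t = (1/6,1/6,1/6,1/6,1/6,1/6,0,0). -/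
theorem stmt_12 (α α₃ : ℝ) (hα₃ : 0 < α₃) (h : α₃ < α) (h23 : α₃ ≤ 2 * α / 3) :
    IsGreatest {v : ℝ | ∃ t : ℕ → ℝ, (∀ i, 0 ≤ t i) ∧ (∀ i j, i ≤ j → t j ≤ t i) ∧
        (∑ i ∈ Finset.range 8, t i = 1) ∧
        v = (α - α₃) * (t 1 + t 4 + t 5) + α * t 3}
      ((α - α₃) / 2 + α / 6) := by
  constructor
  · refine ⟨fun i => if i < 6 then 1/6 else 0, ?_, ?_, ?_, ?_⟩
    · intro i; dsimp only; split <;> norm_num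
    · intro i j hij
      by_cases hj : j < 6
      · have hi : i < 6 := lt_of_le_of_lt hij hj
        simp [hi, hj]
      · simp only [if_neg hj]
        split <;> norm_num
    · simp [Finset.sum_range_succ]; norm_num
    · norm_num; ring
  · rintro v ⟨t, hpos, hmono, hsum, rfl⟩
    simp only [Finset.sum_range_succ, Finset.sum_range_zero, zero_add] at hsum
    have h01 := hmono 0 1 (by norm_num)
    have h12 := hmono 1 2 (by norm_num)
    have h23' := hmono 2 3 (by norm_num)
    have h34 := hmono 3 4 (by norm_num)
    have h45 := hmono 4 5 (by norm_num)
    have h5 := hpos 5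
    have h6 := hpos 6
    have h7 := hpos 7
    have hμ : (0:ℝ) ≤ (α - α₃) / 2 + α / 6 := by linarith
    have hα : (0:ℝ) < α := lt_trans hα₃ h
    nlinarith [mul_nonneg hμ (sub_nonneg.2 h01),
      mul_nonneg (by linarith : (0:ℝ) ≤ α/3) (sub_nonneg.2 h12),
      mul_nonneg (by linarith : (0:ℝ) ≤ (α - α₃)/2 + α/2) (sub_nonneg.2 h23'),
      mul_nonneg (by linarith : (0:ℝ) ≤ (α - α₃) - α/3) (sub_nonneg.2 h34),
      mul_nonneg (by linarith : (0:ℝ) ≤ (α - α₃)/2 - α/6) (sub_nonneg.2 h45),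
      mul_nonneg hμ h5, mul_nonneg hμ h6, mul_nonneg hμ h7]
end
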